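/- Suppose the value vector is relatively flat, in the sense that Σ_{j=1}^M (M/(M+1))^{j−1} v_j ≤ (M+1) v_M. Then the vector b defined by b_k = (1/(M+1)) Σ_{j=k}^M (M/(M+1))^{j−k} v_j for k ∈ {1,…,M} satisfies b_M = v_M/(M+1) and, for every k ∈ {1,…,M−1}, the implicit equation k·(b_k − b_{k+1}) = (v_k − b_k) + Σ_{j=k+1}^M [ (v_j − b_k)_+ − (v_j − b_{k+1})_+ ]; hence b is the unique minimax-loss bid vector in the multi-unit pay-as-bid auction. -/

import Mathlib

noncomputable section

/-- Positive part `(x)₊ = max(x,0)`. -/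
def pos (x : ℝ) : ℝ := max x 0

/-- A bid vector for `M` units: weakly decreasing on `{1,…,M}` and nonnegative at `M`. -/
def IsBid (M : ℕ) (b : ℕ → ℝ) : Prop :=
  (∀ k, 1 ≤ k → k < M → b (k + 1) ≤ b k) ∧ 0 ≤ b M

/-- A value vector for `M` units: weakly decreasing on `{1,…,M}` and nonnegative at `M`. -/
def IsVal (M : ℕ) (v : ℕ → ℝ) : Prop :=
  (∀ k, 1 ≤ k → k < M → v (k + 1) ≤ v k) ∧ 0 ≤ v M

/-- Extension of the bid vector by the convention `b_{M+1} = 0`. -/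
def bext (M : ℕ) (b : ℕ → ℝ) (k : ℕ) : ℝ := if k ≤ M then b k else 0

/-- Conditional regret at quantity `k ∈ {0,…,M}` in the multi-unit pay-as-bid auction:
`R_k(b) = Σ_{j=1}^k (b_j − b_{k+1}) + Σ_{j=k+1}^M (v_j − b_{k+1})₊`. -/
def Rpab (M : ℕ) (v b : ℕ → ℝ) (k : ℕ) : ℝ :=
  (∑ j ∈ Finset.Icc 1 k, (b j - bext M b (k + 1)))
    + ∑ j ∈ Finset.Icc (k + 1) M, pos (v j - bext M b (k + 1))

/-- Maximum loss in the multi-unit pay-as-bid auction: `L^PAB(b) = max_{0 ≤ k ≤ M} R_k(b)`. -/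
def Lpab (M : ℕ) (v b : ℕ → ℝ) : ℝ :=
  (Finset.Icc 0 M).sup' (Finset.nonempty_Icc.mpr (Nat.zero_le M)) (Rpab M v b)

/-- A minimax-loss bid in the multi-unit pay-as-bid auction. -/
def IsMinimaxPAB (M : ℕ) (v b : ℕ → ℝ) : Prop :=
  IsBid M b ∧ ∀ b', IsBid M b' → Lpab M v b ≤ Lpab M v b'

lemma chain_le (M : ℕ) (f : ℕ → ℝ) (h : ∀ k, 1 ≤ k → k < M → f (k+1) ≤ f k) :
    ∀ j k, 1 ≤ j → j ≤ k → k ≤ M → f k ≤ f j := by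
  intro j k
  induction k with
  | zero => intro h1 h2 _; omega
  | succ n ih =>
    intro h1 h2 h3
    rcases eq_or_lt_of_le h2 with he | hl
    · rw [he]
    · exact le_trans (h n (by omega) (by omega)) (ih h1 (by omega) (by omega))

lemma icc_insert (k M : ℕ) (h : k ≤ M) :
    Finset.Icc k M = insert k (Finset.Icc (k+1) M) := by
  ext x; simp [Finset.mem_Icc, Finset.mem_insert]; omega

lemma b_rec (M : ℕ) (v b : ℕ → ℝ)
    (hbdef : ∀ k, b k = (1 / (M + 1)) * ∑ j ∈ Finset.Icc k M, ((M : ℝ) / (M + 1)) ^ (j - k) * v j)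
    (k : ℕ) (hk : k < M) : ((M:ℝ)+1) * b k = v k + M * b (k+1) := by
  have hM1 : ((M:ℝ)+1) ≠ 0 := by positivity
  have hsum : ∑ j ∈ Finset.Icc (k+1) M, ((M : ℝ) / (M + 1)) ^ (j - k) * v j
      = ((M:ℝ)/(M+1)) * ∑ j ∈ Finset.Icc (k+1) M, ((M : ℝ) / (M + 1)) ^ (j - (k+1)) * v j := by
    rw [Finset.mul_sum]
    refine Finset.sum_congr rfl ?_
    intro j hj
    simp only [Finset.mem_Icc] at hj
    have hjk : j - k = (j - (k+1)) + 1 := by omega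
    rw [hjk, pow_succ]; ring
  have h1 := hbdef k
  rw [icc_insert k M (by omega), Finset.sum_insert (by simp [Finset.mem_Icc]), hsum] at h1
  simp only [Nat.sub_self, pow_zero, one_mul] at h1
  rw [h1, hbdef (k+1)]
  field_simp

def Spab (M : ℕ) (v c : ℕ → ℝ) (k : ℕ) : ℝ :=
  (∑ j ∈ Finset.Icc 1 k, c j) + (∑ j ∈ Finset.Icc (k+1) M, v j) - (M:ℝ) * bext M c (k+1)

lemma R_split (M : ℕ) (v c : ℕ → ℝ) (k : ℕ) :
    Rpab M v c k = (∑ j ∈ Finset.Icc 1 k, c j) - (k:ℝ) * bext M c (k+1)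
      + ∑ j ∈ Finset.Icc (k + 1) M, pos (v j - bext M c (k + 1)) := by
  unfold Rpab
  rw [Finset.sum_sub_distrib, Finset.sum_const, Nat.card_Icc]
  simp [nsmul_eq_mul]

lemma S_le_R (M : ℕ) (v c : ℕ → ℝ) (k : ℕ) (hk : k ≤ M) :
    Spab M v c k ≤ Rpab M v c k := by
  rw [R_split M v c k]
  unfold Spab
  have h1 : ∑ j ∈ Finset.Icc (k+1) M, (v j - bext M c (k+1))
      ≤ ∑ j ∈ Finset.Icc (k + 1) M, pos (v j - bext M c (k + 1)) :=
    Finset.sum_le_sum (fun j _ => le_max_left _ _)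
  rw [Finset.sum_sub_distrib, Finset.sum_const, Nat.card_Icc, nsmul_eq_mul] at h1
  have hc : ((M + 1 - (k+1) : ℕ) : ℝ) = (M:ℝ) - k := by
    rw [Nat.cast_sub (by omega)]; push_cast; ring
  rw [hc] at h1
  linarith

lemma R_eq_S (M : ℕ) (v c : ℕ → ℝ) (k : ℕ) (hk : k ≤ M)
    (ht : ∀ j ∈ Finset.Icc (k+1) M, bext M c (k+1) ≤ v j) :
    Rpab M v c k = Spab M v c k := by
  rw [R_split M v c k]
  unfold Spab
  have h1 : ∑ j ∈ Finset.Icc (k + 1) M, pos (v j - bext M c (k + 1))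
      = ∑ j ∈ Finset.Icc (k+1) M, (v j - bext M c (k+1)) :=
    Finset.sum_congr rfl (fun j hj => max_eq_left (by linarith [ht j hj]))
  rw [h1, Finset.sum_sub_distrib, Finset.sum_const, Nat.card_Icc, nsmul_eq_mul]
  have hc : ((M + 1 - (k+1) : ℕ) : ℝ) = (M:ℝ) - k := by
    rw [Nat.cast_sub (by omega)]; push_cast; ring
  rw [hc]; ring

/-- with a relatively flat value vector, the explicit formula
`b_k = (1/(M+1)) Σ_{j=k}^M (M/(M+1))^{j−k} v_j` satisfies `b_M = v_M/(M+1)` and the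
implicit equations, and it is the unique minimax-loss bid in the pay-as-bid auction. -/
theorem minimax_pab_flat_values_closed_form
    (M : ℕ) (hM : 1 ≤ M) (v : ℕ → ℝ) (hv : IsVal M v)
    (hflat : ∑ j ∈ Finset.Icc 1 M, ((M : ℝ) / (M + 1)) ^ (j - 1) * v j ≤ (M + 1) * v M)
    (b : ℕ → ℝ)
    (hbdef : ∀ k, b k = (1 / (M + 1)) * ∑ j ∈ Finset.Icc k M, ((M : ℝ) / (M + 1)) ^ (j - k) * v j) :
    b M = v M / (M + 1) ∧
    (∀ k, 1 ≤ k → k < M →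
      (k : ℝ) * (b k - b (k + 1)) =
        (v k - b k) +
          ∑ j ∈ Finset.Icc (k + 1) M, (pos (v j - b k) - pos (v j - b (k + 1)))) ∧
    IsMinimaxPAB M v b ∧
    (∀ b', IsMinimaxPAB M v b' → ∀ k ∈ Finset.Icc 1 M, b' k = b k) := by
  have hM1 : ((M:ℝ)+1) ≠ 0 := by positivity
  have hMpos : (0:ℝ) < M := by exact_mod_cast hM
  have hrec := b_rec M v b hbdef
  -- b M = v M / (M+1)
  have hbM : b M = v M / (M + 1) := by
    have h1 := hbdef M
    rw [show Finset.Icc M M = {M} from Finset.Icc_self M] at h1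
    simp at h1
    rw [h1]; ring
  -- v is ≥ v M on [1,M]
  have hvch : ∀ j, 1 ≤ j → j ≤ M → v M ≤ v j := fun j h1 h2 =>
    chain_le M v hv.1 j M h1 h2 le_rfl
  -- b 1 ≤ v M
  have hb1 : b 1 ≤ v M := by
    rw [hbdef 1]
    have h2 : (0:ℝ) < 1/((M:ℝ)+1) := by positivity
    calc (1/((M:ℝ)+1)) * ∑ j ∈ Finset.Icc 1 M, ((M : ℝ) / (M + 1)) ^ (j - 1) * v j
        ≤ (1/((M:ℝ)+1)) * (((M:ℝ)+1) * v M) := by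
          exact mul_le_mul_of_nonneg_left hflat (le_of_lt h2)
      _ = v M := by field_simp
  -- b k ≤ v M on [1,M] by upward induction
  have hble : ∀ k, 1 ≤ k → k ≤ M → b k ≤ v M := by
    intro k hk
    induction k, hk using Nat.le_induction with
    | base => intro _; exact hb1
    | succ n hn ih =>
      intro hnM
      have h1 := ih (by omega)
      have h2 := hrec n (by omega)
      have h3 := hvch n hn (by omega)
      nlinarith
  -- b is weakly decreasing
  have hbmono : ∀ k, 1 ≤ k → k < M → b (k+1) ≤ b k := by
    intro k hk hkM
    have h1 := hrec k hkM
    have h2 := hble (k+1) (by omega) (by omega)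
    have h3 := hvch k hk (by omega)
    nlinarith
  have hbMnn : 0 ≤ b M := by
    rw [hbM]; have := hv.2; positivity
  have hbid : IsBid M b := ⟨hbmono, hbMnn⟩
  -- b k ≤ v j on the square
  have hbv : ∀ k j, 1 ≤ k → k ≤ M → 1 ≤ j → j ≤ M → b k ≤ v j := fun k j h1 h2 h3 h4 =>
    le_trans (hble k h1 h2) (hvch j h3 h4)
  -- implicit equations
  have himpl : ∀ k, 1 ≤ k → k < M →
      (k : ℝ) * (b k - b (k + 1)) =
        (v k - b k) +
          ∑ j ∈ Finset.Icc (k + 1) M, (pos (v j - b k) - pos (v j - b (k + 1))) := by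
    intro k hk hkM
    have hsum : ∑ j ∈ Finset.Icc (k + 1) M, (pos (v j - b k) - pos (v j - b (k + 1)))
        = ∑ j ∈ Finset.Icc (k + 1) M, (b (k+1) - b k) := by
      refine Finset.sum_congr rfl ?_
      intro j hj
      simp only [Finset.mem_Icc] at hj
      have e1 : pos (v j - b k) = v j - b k :=
        max_eq_left (by linarith [hbv k j hk (by omega) (by omega) hj.2])
      have e2 : pos (v j - b (k+1)) = v j - b (k+1) :=
        max_eq_left (by linarith [hbv (k+1) j (by omega) (by omega) (by omega) hj.2])
      rw [e1, e2]; ring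
    rw [hsum, Finset.sum_const, Nat.card_Icc, nsmul_eq_mul]
    have hc : ((M + 1 - (k+1) : ℕ) : ℝ) = (M:ℝ) - k := by
      rw [Nat.cast_sub (by omega)]; push_cast; ring
    rw [hc]
    have h1 := hrec k hkM
    nlinarith [h1]
  -- Spab for b is constant
  have hSk : ∀ k, k ≤ M → Spab M v b k = Spab M v b 0 := by
    intro k
    induction k with
    | zero => intro _; rfl
    | succ n ih =>
      intro hn
      rw [← ih (by omega)]
      have hsum1 : ∑ j ∈ Finset.Icc 1 (n+1), b j = (∑ j ∈ Finset.Icc 1 n, b j) + b (n+1) :=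
        Finset.sum_Icc_succ_top (by omega) b
      have hsum2 : ∑ j ∈ Finset.Icc (n+1) M, v j = v (n+1) + ∑ j ∈ Finset.Icc (n+2) M, v j := by
        rw [icc_insert (n+1) M (by omega), Finset.sum_insert (by simp [Finset.mem_Icc])]
      rcases lt_or_eq_of_le hn with hlt | heq
      · have hb2 : bext M b (n+2) = b (n+2) := by unfold bext; rw [if_pos (by omega)]
        have hb0 : bext M b (n+1) = b (n+1) := by unfold bext; rw [if_pos (by omega)]
        have h1 := hrec (n+1) hlt
        unfold Spab
        rw [hsum1, hsum2]
        have hb2' : bext M b (n+1+1) = b (n+2) := by unfold bext; rw [if_pos (by omega)]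
        rw [hb2', hb0]
        linarith
      · -- n+1 = M
        subst heq
        unfold Spab
        rw [hsum1, hsum2]
        have hb2' : bext (n+1) b (n+1+1) = 0 := by unfold bext; rw [if_neg (by omega)]
        have hb0 : bext (n+1) b (n+1) = b (n+1) := by unfold bext; rw [if_pos (by omega)]
        rw [hb2', hb0]
        have hbMeq : (((n+1:ℕ):ℝ)+1) * b (n+1) = v (n+1) := by rw [hbM]; field_simp
        push_cast at hbMeq ⊢
        linarith
  -- Rpab for b equals Spab
  have hRb : ∀ k, k ≤ M → Rpab M v b k = Spab M v b k := by
    intro k hk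
    refine R_eq_S M v b k hk ?_
    intro j hj
    simp only [Finset.mem_Icc] at hj
    have hkM : k < M := by omega
    have : bext M b (k+1) = b (k+1) := by unfold bext; rw [if_pos (by omega)]
    rw [this]
    exact hbv (k+1) j (by omega) (by omega) (by omega) hj.2
  -- Lpab M v b = Spab M v b 0
  have hLb : Lpab M v b = Spab M v b 0 := by
    unfold Lpab
    apply le_antisymm
    · apply Finset.sup'_le
      intro k hk
      simp only [Finset.mem_Icc] at hk
      rw [hRb k hk.2, hSk k hk.2]
    · have h0 : (0:ℕ) ∈ Finset.Icc 0 M := by simp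
      have := Finset.le_sup' (Rpab M v b) h0
      rw [hRb 0 (by omega)] at this
      exact this
  -- core: any b' with Lpab ≤ Lpab b agrees with b on [1,M]
  have hcore : ∀ b', Lpab M v b' ≤ Lpab M v b → ∀ k, 1 ≤ k → k ≤ M → b' k = b k := by
    intro b' hL'
    have hSle : ∀ k, k ≤ M → Spab M v b' k ≤ Spab M v b k := by
      intro k hk
      have h1 : Rpab M v b' k ≤ Lpab M v b' :=
        Finset.le_sup' (Rpab M v b') (by simp [Finset.mem_Icc]; omega)
      have h2 := S_le_R M v b' k hk
      rw [hSk k hk]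
      rw [hLb] at hL'
      linarith
    set P : ℕ → ℝ := fun k => ∑ j ∈ Finset.Icc 1 k, (b' j - b j) with hP
    have hP0 : P 0 = 0 := by simp [hP]
    have hPsucc : ∀ n, P (n+1) = P n + (b' (n+1) - b (n+1)) := by
      intro n
      simp only [hP]
      exact Finset.sum_Icc_succ_top (by omega) _
    have hSdiff : ∀ k, k ≤ M → Spab M v b' k - Spab M v b k
        = P k - (M:ℝ) * (bext M b' (k+1) - bext M b (k+1)) := by
      intro k hk
      unfold Spab
      simp only [hP, Finset.sum_sub_distrib]
      ring
    have hstep : ∀ k, k < M → ((M:ℝ)+1) * P k ≤ (M:ℝ) * P (k+1) := by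
      intro k hkM
      have h1 := hSle k (by omega)
      have h2 := hSdiff k (by omega)
      have hb1' : bext M b' (k+1) = b' (k+1) := by unfold bext; rw [if_pos (by omega)]
      have hb2' : bext M b (k+1) = b (k+1) := by unfold bext; rw [if_pos (by omega)]
      rw [hb1', hb2'] at h2
      have h3 := hPsucc k
      nlinarith
    have hPM : P M ≤ 0 := by
      have h1 := hSle M le_rfl
      have h2 := hSdiff M le_rfl
      have hb1' : bext M b' (M+1) = 0 := by unfold bext; rw [if_neg (by omega)]
      have hb2' : bext M b (M+1) = 0 := by unfold bext; rw [if_neg (by omega)]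
      rw [hb1', hb2'] at h2
      simp at h2
      linarith
    have hPge : ∀ k, k ≤ M → 0 ≤ P k := by
      intro k
      induction k with
      | zero => intro _; rw [hP0]
      | succ n ih =>
        intro hn
        have h1 := ih (by omega)
        have h2 := hstep n (by omega)
        nlinarith
    have hPzero : ∀ d, d ≤ M → P (M - d) = 0 := by
      intro d
      induction d with
      | zero => intro _; simp only [Nat.sub_zero]; exact le_antisymm hPM (hPge M le_rfl)
      | succ n ih =>
        intro hn
        have h1 := ih (by omega)
        have h2 := hstep (M - (n+1)) (by omega)
        rw [show M - (n+1) + 1 = M - n from by omega, h1] at h2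
        have h3 := hPge (M - (n+1)) (by omega)
        nlinarith
    intro k hk1 hkM
    have e1 : P k = 0 := by
      have := hPzero (M - k) (by omega)
      rwa [show M - (M - k) = k from by omega] at this
    have e2 : P (k-1) = 0 := by
      have := hPzero (M - (k-1)) (by omega)
      rwa [show M - (M - (k-1)) = k - 1 from by omega] at this
    have h3 := hPsucc (k-1)
    rw [show k - 1 + 1 = k from by omega] at h3
    rw [e1, e2] at h3
    linarith
  -- Lpab depends only on values on [1,M]
  have hcongr : ∀ c : ℕ → ℝ, (∀ j, 1 ≤ j → j ≤ M → c j = b j) → Lpab M v c = Lpab M v b := by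
    intro c hc
    unfold Lpab
    apply Finset.sup'_congr _ rfl
    intro k hk
    simp only [Finset.mem_Icc] at hk
    have hbe : bext M c (k+1) = bext M b (k+1) := by
      unfold bext
      by_cases h : k + 1 ≤ M
      · rw [if_pos h, if_pos h, hc (k+1) (by omega) h]
      · rw [if_neg h, if_neg h]
    unfold Rpab
    rw [hbe]
    congr 1
    refine Finset.sum_congr rfl ?_
    intro j hj
    simp only [Finset.mem_Icc] at hj
    rw [hc j hj.1 (by omega)]
  refine ⟨hbM, himpl, ⟨hbid, ?_⟩, ?_⟩
  · -- minimaxity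
    intro b' _
    by_contra hcon
    push_neg at hcon
    have hagree := hcore b' (le_of_lt hcon)
    have := hcongr b' hagree
    rw [this] at hcon
    exact lt_irrefl _ hcon
  · -- uniqueness
    intro b' hb' k hk
    simp only [Finset.mem_Icc] at hk
    exact hcore b' (hb'.2 b hbid) k hk.1 hk.2

end
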